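/- Let n ≥ 1 and let w_0, …, w_n be n+1 unit vectors in R^n. Then the minimum, over all index choices 0 ≤ j_1 < … < j_n ≤ n, of |det(w_{j_1}, …, w_{j_n})| is at most sqrt((n+1)^(n-1) / n^n). -/

import Mathlib

open Finset Matrix

/-- The maximin determinants problem for `n+1` unit vectors in `ℝⁿ`: the minimum,
over all strictly increasing index choices `0 ≤ j₁ < ⋯ < jₙ ≤ n`, of
`|det(w_{j₁}, …, w_{jₙ})|` is at most `√((n+1)^(n-1) / nⁿ)`. -/
theorem stmt2 (n : ℕ) (hn : 1 ≤ n) (w : Fin (n + 1) → EuclideanSpace ℝ (Fin n))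
    (hw : ∀ j, ‖w j‖ = 1) :
    ∃ s : Fin n → Fin (n + 1), StrictMono s ∧
      |Matrix.det (Matrix.of fun i a => w (s a) i)| ≤
        Real.sqrt (((n : ℝ) + 1) ^ (n - 1) / (n : ℝ) ^ n) := by
  classical
  have hnne : (n : ℝ) ≠ 0 := Nat.cast_ne_zero.mpr (by omega)
  have hn2 : (-1 : ℝ) ^ n * (-1 : ℝ) ^ n = 1 := by
    rw [← pow_add]; exact Even.neg_one_pow ⟨n, rfl⟩
  set D : Fin (n + 1) → ℝ :=
    fun i => Matrix.det (Matrix.of fun k a => w (i.succAbove a) k) with hDdef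
  set v : Fin (n + 1) → ℝ := fun i => (-1) ^ (i : ℕ) * D i with hvdef
  -- Laplace expansion along the last column, for any matrix of this shape
  have hexp : ∀ c : Fin (n + 1) → ℝ,
      Matrix.det (Matrix.of (fun i => Fin.snoc (fun k => w i k) (c i)) :
          Matrix (Fin (n + 1)) (Fin (n + 1)) ℝ)
        = ∑ i : Fin (n + 1), (-1) ^ ((i : ℕ) + n) * c i * D i := by
    intro c
    rw [Matrix.det_succ_column _ (Fin.last n)]
    refine Finset.sum_congr rfl fun i _ => ?_
    have h1 : (Matrix.of (fun i => Fin.snoc (fun k => w i k) (c i)) :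
          Matrix (Fin (n + 1)) (Fin (n + 1)) ℝ).submatrix i.succAbove (Fin.last n).succAbove
        = (Matrix.of fun k a => w (i.succAbove a) k)ᵀ := by
      ext k a
      simp [Fin.succAbove_last]
    rw [h1, Matrix.det_transpose, Fin.val_last]
    simp [hDdef]
  set M : Matrix (Fin (n + 1)) (Fin (n + 1)) ℝ :=
    Matrix.of (fun i => Fin.snoc (fun k => w i k) (v i)) with hMdef
  have hdetM : Matrix.det M = (-1) ^ n * ∑ i, D i ^ 2 := by
    rw [hMdef, hexp v, Finset.mul_sum]
    refine Finset.sum_congr rfl fun i _ => ?_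
    have hi : (-1 : ℝ) ^ (i : ℕ) * (-1 : ℝ) ^ (i : ℕ) = 1 := by
      rw [← pow_add]; exact Even.neg_one_pow ⟨i, rfl⟩
    simp only [hvdef]
    rw [pow_add]
    linear_combination ((-1 : ℝ) ^ n * D i ^ 2) * hi
  have horth : ∀ a : Fin n, ∑ i, w i a * v i = 0 := by
    intro a
    have hd0 : Matrix.det (Matrix.of (fun i => Fin.snoc (fun k => w i k) (w i a)) :
        Matrix (Fin (n + 1)) (Fin (n + 1)) ℝ) = 0 := by
      apply Matrix.det_zero_of_column_eq (i := Fin.castSucc a) (j := Fin.last n)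
      · exact Fin.ne_of_lt (Fin.castSucc_lt_last a)
      · intro k; simp
    have h := hexp fun i => w i a
    rw [hd0] at h
    have hrw : ∑ i, w i a * v i
        = (-1 : ℝ) ^ n * ∑ i : Fin (n + 1), (-1) ^ ((i : ℕ) + n) * w i a * D i := by
      rw [Finset.mul_sum]
      refine Finset.sum_congr rfl fun i _ => ?_
      simp only [hvdef]
      rw [pow_add]
      linear_combination (-(w i a * D i * (-1 : ℝ) ^ (i : ℕ))) * hn2
    rw [hrw, ← h, mul_zero]
  set W : Matrix (Fin n) (Fin (n + 1)) ℝ := Matrix.of (fun k i => w i k) with hWdef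
  set G : Matrix (Fin n) (Fin n) ℝ := W * Wᴴ with hGdef
  have hGpsd : G.PosSemidef := Matrix.posSemidef_self_mul_conjTranspose W
  have hGent : ∀ a b : Fin n, G a b = ∑ i, w i a * w i b := by
    intro a b; simp [hGdef, hWdef, Matrix.mul_apply]
  -- the key identity (Cauchy–Binet in this special case)
  have hPG : (∑ i, D i ^ 2) ^ 2 = Matrix.det G * ∑ i, D i ^ 2 := by
    have h1 : Matrix.det (Mᵀ * M) = (∑ i, D i ^ 2) ^ 2 := by
      rw [Matrix.det_mul, Matrix.det_transpose, hdetM]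
      linear_combination ((∑ i, D i ^ 2) ^ 2) * hn2
    have hMl : ∀ (i : Fin (n + 1)) (a : Fin n),
        M i (Fin.castAdd 1 a) = w i a := by
      intro i a
      have hc : (Fin.castAdd 1 a : Fin (n + 1)) = Fin.castSucc a := rfl
      rw [hc, hMdef]
      simp
    have hMr : ∀ (i : Fin (n + 1)) (b : Fin 1),
        M i (Fin.natAdd n b) = v i := by
      intro i b
      have hb : b = 0 := Subsingleton.elim _ _
      subst hb
      have hc : (Fin.natAdd n (0 : Fin 1) : Fin (n + 1)) = Fin.last n := by
        ext; simp
      rw [hc, hMdef]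
      simp
    have h2 : Matrix.det (Mᵀ * M) = Matrix.det G * ∑ i, D i ^ 2 := by
      rw [← Matrix.det_submatrix_equiv_self finSumFinEquiv (Mᵀ * M)]
      have hblock : (Mᵀ * M).submatrix finSumFinEquiv finSumFinEquiv
          = Matrix.fromBlocks G 0 0 (Matrix.of fun _ _ => ∑ i, D i ^ 2) := by
        ext j j'
        rcases j with a | b <;> rcases j' with a' | b'
        · simp [Matrix.mul_apply, finSumFinEquiv_apply_left, hMl, hGent]
        · simp only [Matrix.submatrix_apply, Matrix.mul_apply, Matrix.transpose_apply,
            finSumFinEquiv_apply_left, finSumFinEquiv_apply_right,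
            Matrix.fromBlocks_apply₁₂, Matrix.zero_apply]
          simp only [hMl, hMr]
          exact horth a
        · simp only [Matrix.submatrix_apply, Matrix.mul_apply, Matrix.transpose_apply,
            finSumFinEquiv_apply_left, finSumFinEquiv_apply_right,
            Matrix.fromBlocks_apply₂₁, Matrix.zero_apply]
          simp only [hMl, hMr]
          rw [← horth a']
          exact Finset.sum_congr rfl fun i _ => mul_comm _ _
        · simp only [Matrix.submatrix_apply, Matrix.mul_apply, Matrix.transpose_apply,
            finSumFinEquiv_apply_left, finSumFinEquiv_apply_right,
            Matrix.fromBlocks_apply₂₂, Matrix.of_apply]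
          simp only [hMr]
          refine Finset.sum_congr rfl fun i _ => ?_
          have hi : (-1 : ℝ) ^ (i : ℕ) * (-1 : ℝ) ^ (i : ℕ) = 1 := by
            rw [← pow_add]; exact Even.neg_one_pow ⟨i, rfl⟩
          simp only [hvdef]
          linear_combination (D i ^ 2) * hi
      rw [hblock, Matrix.det_fromBlocks_zero₂₁, Matrix.det_fin_one]
      simp
    rw [← h1, h2]
  -- eigenvalues of G
  have hH : G.IsHermitian := hGpsd.1
  set μ : Fin n → ℝ := hH.eigenvalues with hμdef
  have hμ0 : ∀ i, 0 ≤ μ i := fun i => hGpsd.eigenvalues_nonneg i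
  have hdetGP : Matrix.det G = ∏ i, μ i := by
    simpa using hH.det_eq_prod_eigenvalues
  have htraceG : Matrix.trace G = ∑ i, μ i := by
    simpa using hH.trace_eq_sum_eigenvalues
  have hunit : ∀ i, ∑ a, w i a ^ 2 = 1 := by
    intro i
    have h1 := hw i
    rw [EuclideanSpace.norm_eq] at h1
    have h2 : ∑ a, ‖w i a‖ ^ 2 = 1 := Real.sqrt_eq_one.mp h1
    simpa [Real.norm_eq_abs, sq_abs] using h2
  have htrace : Matrix.trace G = (n : ℝ) + 1 := by
    have : Matrix.trace G = ∑ a, ∑ i, w i a * w i a := by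
      simp only [Matrix.trace, Matrix.diag]
      exact Finset.sum_congr rfl fun a _ => hGent a a
    rw [this, Finset.sum_comm]
    have : ∀ i : Fin (n + 1), ∑ a, w i a * w i a = 1 := by
      intro i; rw [← hunit i]; exact Finset.sum_congr rfl fun a _ => (sq (w i a)).symm
    rw [Finset.sum_congr rfl fun i _ => this i]
    simp
  have hsumμ : ∑ i, μ i = (n : ℝ) + 1 := by rw [← htraceG, htrace]
  -- AM–GM
  have hgm : ∏ i, μ i ≤ (((n : ℝ) + 1) / n) ^ n := by
    have key := Real.geom_mean_le_arith_mean_weighted Finset.univ (fun _ => (n : ℝ)⁻¹) μ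
      (fun i _ => by positivity)
      (by
        rw [Finset.sum_const, Finset.card_univ, Fintype.card_fin, nsmul_eq_mul]
        exact mul_inv_cancel₀ hnne)
      (fun i _ => hμ0 i)
    have hrpow : ∀ i : Fin n, (μ i ^ ((n : ℝ)⁻¹)) ^ (n : ℕ) = μ i := by
      intro i
      rw [← Real.rpow_natCast (μ i ^ ((n : ℝ)⁻¹)), ← Real.rpow_mul (hμ0 i),
        inv_mul_cancel₀ hnne, Real.rpow_one]
    calc ∏ i, μ i = (∏ i, μ i ^ ((n : ℝ)⁻¹)) ^ (n : ℕ) := by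
          rw [← Finset.prod_pow]
          exact (Finset.prod_congr rfl fun i _ => hrpow i).symm
      _ ≤ (∑ i, (n : ℝ)⁻¹ * μ i) ^ (n : ℕ) := by
          refine pow_le_pow_left₀ (Finset.prod_nonneg fun i _ => ?_) key n
          exact Real.rpow_nonneg (hμ0 i) _
      _ = (((n : ℝ) + 1) / n) ^ n := by
          rw [← Finset.mul_sum, hsumμ, inv_mul_eq_div]
  have hdetGnn : 0 ≤ Matrix.det G := by
    rw [hdetGP]; exact Finset.prod_nonneg fun i _ => hμ0 i
  have hSnn : 0 ≤ ∑ i, D i ^ 2 := Finset.sum_nonneg fun i _ => sq_nonneg _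
  have hSle : ∑ i, D i ^ 2 ≤ Matrix.det G := by
    rcases hSnn.eq_or_lt with h0 | hpos
    · exact h0 ▸ hdetGnn
    · exact le_of_eq (mul_right_cancel₀ hpos.ne' (by rw [← sq]; exact hPG))
  obtain ⟨i, -, hmin⟩ := Finset.exists_min_image Finset.univ (fun i => D i ^ 2)
    ⟨0, Finset.mem_univ 0⟩
  have hmin' : ((n : ℝ) + 1) * D i ^ 2 ≤ ∑ j, D j ^ 2 := by
    calc ((n : ℝ) + 1) * D i ^ 2 = ∑ _j : Fin (n + 1), D i ^ 2 := by
          rw [Finset.sum_const, Finset.card_univ, Fintype.card_fin, nsmul_eq_mul]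
          push_cast; ring
      _ ≤ ∑ j, D j ^ 2 := Finset.sum_le_sum fun j _ => hmin j (Finset.mem_univ j)
  have hfin : D i ^ 2 ≤ ((n : ℝ) + 1) ^ (n - 1) / (n : ℝ) ^ n := by
    have h1 : ((n : ℝ) + 1) * D i ^ 2 ≤ (((n : ℝ) + 1) / n) ^ n :=
      le_trans hmin' (le_trans hSle (hdetGP ▸ hgm))
    have hpow : (((n : ℝ) + 1) / n) ^ n
        = ((n : ℝ) + 1) * (((n : ℝ) + 1) ^ (n - 1) / (n : ℝ) ^ n) := by
      rw [div_pow]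
      have hs : ((n : ℝ) + 1) ^ n = ((n : ℝ) + 1) * ((n : ℝ) + 1) ^ (n - 1) := by
        rw [← pow_succ']
        congr 1
        omega
      rw [hs, mul_div_assoc]
    rw [hpow] at h1
    have hpos1 : (0 : ℝ) < (n : ℝ) + 1 := by positivity
    exact le_of_mul_le_mul_left h1 hpos1
  refine ⟨i.succAbove, Fin.strictMono_succAbove i, ?_⟩
  have hfinal : |D i| ≤ Real.sqrt (((n : ℝ) + 1) ^ (n - 1) / (n : ℝ) ^ n) := by
    rw [← Real.sqrt_sq_eq_abs]
    exact Real.sqrt_le_sqrt hfin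
  exact hfinal
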